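/- Fix a, b, c ∈ ℂ with a ≠ b, |c| = 1, and c ≠ (a−b)²/|a−b|², let d > 0, S_t = [[a, t], [ct, b]], and E_d = ⋃_{t ∈ (0,d)} W(S_t). Then a, b ∈ ∂(W(S_d)) and E_d = int(W(S_d)) ∪ {a, b}; in particular, E_d is neither open nor closed in ℂ. -/

import Mathlib

/-- The numerical range of a `2 × 2` complex matrix. -/
noncomputable def numRange (M : Matrix (Fin 2) (Fin 2) ℂ) : Set ℂ :=
  {z | ∃ x : EuclideanSpace ℂ (Fin 2), ‖x‖ = 1 ∧
    z = inner (𝕜 := ℂ) x (Matrix.toEuclideanCLM (𝕜 := ℂ) M x)}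

/-! ### Auxiliary lemmas -/

section aux

open Complex Metric

lemma exists_sqrt' (c : ℂ) (hc : ‖c‖ = 1) :
    ∃ w : ℂ, w ^ 2 = c ∧ ‖w‖ = 1 := by
  refine ⟨Complex.exp (Complex.arg c * Complex.I / 2), ?_, ?_⟩
  · rw [← Complex.exp_nat_mul]
    push_cast
    rw [show (2 : ℂ) * (↑c.arg * Complex.I / 2) = ↑c.arg * Complex.I by ring]
    nth_rewrite 2 [← Complex.norm_mul_exp_arg_mul_I c]
    rw [hc]; push_cast; ring
  · rw [Complex.norm_exp]
    norm_num

lemma inner_formula (M : Matrix (Fin 2) (Fin 2) ℂ) (x : EuclideanSpace ℂ (Fin 2)) :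
    inner (𝕜 := ℂ) x (Matrix.toEuclideanCLM (𝕜 := ℂ) M x)
      = (starRingEnd ℂ) (x 0) * (M 0 0 * x 0 + M 0 1 * x 1)
        + (starRingEnd ℂ) (x 1) * (M 1 0 * x 0 + M 1 1 * x 1) := by
  have h : ∀ i, (Matrix.toEuclideanCLM (𝕜 := ℂ) M x) i = M.mulVec (x) i := fun i => rfl
  simp [PiLp.inner_apply, RCLike.inner_apply, h, Matrix.mulVec, dotProduct,
    Fin.sum_univ_two]
  ring

lemma norm_one_iff (x : EuclideanSpace ℂ (Fin 2)) :
    ‖x‖ = 1 ↔ Complex.normSq (x 0) + Complex.normSq (x 1) = 1 := by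
  rw [EuclideanSpace.norm_eq, Fin.sum_univ_two]
  simp only [Complex.sq_norm]
  exact Real.sqrt_eq_one

lemma mem_numRange_iff (M : Matrix (Fin 2) (Fin 2) ℂ) (z : ℂ) :
    z ∈ numRange M ↔ ∃ x0 x1 : ℂ, Complex.normSq x0 + Complex.normSq x1 = 1 ∧
      z = (starRingEnd ℂ) x0 * (M 0 0 * x0 + M 0 1 * x1)
        + (starRingEnd ℂ) x1 * (M 1 0 * x0 + M 1 1 * x1) := by
  constructor
  · rintro ⟨x, hx, rfl⟩
    exact ⟨x 0, x 1, (norm_one_iff x).mp hx, inner_formula M x⟩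
  · rintro ⟨x0, x1, hn, rfl⟩
    refine ⟨(WithLp.equiv 2 (Fin 2 → ℂ)).symm ![x0, x1], ?_, ?_⟩
    · rw [norm_one_iff]; simpa using hn
    · rw [inner_formula]; simp

/-- The (filled) ellipse with center `z₀`, semi-axes directions `v`, `w` scaled by `t`. -/
def eSet (z₀ v w : ℂ) (t : ℝ) : Set ℂ :=
  {z | ∃ p q : ℝ, p ^ 2 + q ^ 2 ≤ 1 ∧ z = z₀ + (p : ℂ) * v + (t : ℂ) * (q : ℂ) * w}

/-- The open version. -/
def eSetI (z₀ v w : ℂ) (t : ℝ) : Set ℂ :=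
  {z | ∃ p q : ℝ, p ^ 2 + q ^ 2 < 1 ∧ z = z₀ + (p : ℂ) * v + (t : ℂ) * (q : ℂ) * w}

/-- The boundary version. -/
def eSetF (z₀ v w : ℂ) (t : ℝ) : Set ℂ :=
  {z | ∃ p q : ℝ, p ^ 2 + q ^ 2 = 1 ∧ z = z₀ + (p : ℂ) * v + (t : ℂ) * (q : ℂ) * w}

lemma numRange_eq (a b c w : ℂ) (t : ℝ) (hw2 : w ^ 2 = c) (hw1 : ‖w‖ = 1) :
    numRange !![a, (t : ℂ); c * t, b] = eSet ((a + b) / 2) ((a - b) / 2) w t := by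
  have hnw : Complex.normSq w = 1 := by rw [Complex.normSq_eq_norm_sq, hw1]; norm_num
  have hwX : w * (starRingEnd ℂ) w = 1 := by rw [Complex.mul_conj, hnw]; norm_num
  ext z
  rw [mem_numRange_iff]
  simp only [show (!![a, (t : ℂ); c * t, b] : Matrix (Fin 2) (Fin 2) ℂ) 0 0 = a from rfl,
    show (!![a, (t : ℂ); c * t, b] : Matrix (Fin 2) (Fin 2) ℂ) 0 1 = (t : ℂ) from rfl,
    show (!![a, (t : ℂ); c * t, b] : Matrix (Fin 2) (Fin 2) ℂ) 1 0 = c * (t : ℂ) from rfl,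
    show (!![a, (t : ℂ); c * t, b] : Matrix (Fin 2) (Fin 2) ℂ) 1 1 = b from rfl]
  constructor
  · rintro ⟨x0, x1, hn, rfl⟩
    set u := Complex.normSq x0 with hu
    set u' := Complex.normSq x1 with hu'
    set ζ := (starRingEnd ℂ) w * (starRingEnd ℂ) x0 * x1 with hζ
    refine ⟨u - u', 2 * ζ.re, ?_, ?_⟩
    · have h1 : ζ.re ^ 2 ≤ Complex.normSq ζ := by
        rw [Complex.normSq_apply]; nlinarith [sq_nonneg ζ.im]
      have h2 : Complex.normSq ζ = u * u' := by
        simp [hζ, Complex.normSq_mul, hnw, hu, hu']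
      nlinarith [h1, h2, hn]
    · have hc0 : x0 * (starRingEnd ℂ) x0 = (u : ℂ) := by rw [Complex.mul_conj, hu]
      have hc1 : x1 * (starRingEnd ℂ) x1 = (u' : ℂ) := by rw [Complex.mul_conj, hu']
      have hnc : (u : ℂ) + (u' : ℂ) = 1 := by exact_mod_cast congrArg (Complex.ofReal) hn
      have h4 : ((2 * ζ.re : ℝ) : ℂ) = ζ + (starRingEnd ℂ) ζ := (Complex.add_conj ζ).symm
      have h3 : ζ + (starRingEnd ℂ) ζ = (starRingEnd ℂ) w * (starRingEnd ℂ) x0 * x1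
          + w * x0 * (starRingEnd ℂ) x1 := by
        simp only [hζ, map_mul, Complex.conj_conj]
      push_cast at h4 ⊢
      rw [h4, h3, ← hw2]
      linear_combination a * hc0 + b * hc1 + ((a + b) / 2) * hnc
        - (t : ℂ) * ((starRingEnd ℂ) x0) * x1 * hwX
  · rintro ⟨p, q, h, rfl⟩
    have hp1 : p ≤ 1 := by nlinarith
    have hp1' : -1 ≤ p := by nlinarith
    set u : ℝ := (1 + p) / 2 with hu
    set u' : ℝ := (1 - p) / 2 with hu'
    have hu0 : 0 ≤ u := by simp [hu]; linarith
    have hu'0 : 0 ≤ u' := by simp [hu']; linarith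
    have hq4 : q ^ 2 / 4 ≤ u * u' := by simp [hu, hu']; nlinarith
    by_cases h0 : u = 0
    · have hpq : p = -1 := by simp [hu] at h0; linarith
      have hq0 : q = 0 := by nlinarith [sq_nonneg q]
      refine ⟨0, 1, by simp, ?_⟩
      simp [hpq, hq0]
      ring
    · have hupos : 0 < u := lt_of_le_of_ne hu0 (Ne.symm h0)
      set r : ℝ := Real.sqrt u with hr
      have hrpos : 0 < r := Real.sqrt_pos.mpr hupos
      have hrne : r ≠ 0 := ne_of_gt hrpos
      have hr2 : r ^ 2 = u := Real.sq_sqrt hu0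
      set s1 : ℝ := Real.sqrt (u * u' - q ^ 2 / 4) / r with hs1
      set q1 : ℝ := q / (2 * r) with hq1
      have hsum : q1 ^ 2 + s1 ^ 2 = u' := by
        rw [hq1, hs1, div_pow, div_pow, Real.sq_sqrt (by linarith),
          show (2 * r) ^ 2 = 4 * u by rw [mul_pow, hr2]; ring, hr2]
        field_simp
        ring
      set m : ℂ := (q1 : ℂ) + (s1 : ℂ) * Complex.I with hm
      have hmre : m.re = q1 := by simp [hm]
      have hmsq : Complex.normSq m = u' := by
        rw [hm, Complex.normSq_add_mul_I]; exact hsum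
      refine ⟨(r : ℂ), w * m, ?_, ?_⟩
      · rw [Complex.normSq_mul, hnw, hmsq, Complex.normSq_ofReal]
        nlinarith [hr2]
      · have A2 : m * (starRingEnd ℂ) m = (u' : ℂ) := by
          rw [Complex.mul_conj, hmsq]
        have A3 : m + (starRingEnd ℂ) m = 2 * (q1 : ℂ) := by
          have := Complex.add_conj m
          rw [this, hmre]; push_cast; ring
        have A4 : (r : ℂ) ^ 2 = (u : ℂ) := by exact_mod_cast congrArg Complex.ofReal hr2
        have A5 : 2 * (q1 : ℂ) * (r : ℂ) = (q : ℂ) := by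
          have : 2 * q1 * r = q := by rw [hq1]; field_simp
          exact_mod_cast congrArg Complex.ofReal this
        have A6 : (u : ℂ) = (1 + (p : ℂ)) / 2 := by rw [hu]; push_cast; ring
        have A7 : (u' : ℂ) = (1 - (p : ℂ)) / 2 := by rw [hu']; push_cast; ring
        rw [← hw2]
        simp only [map_mul, Complex.conj_ofReal]
        linear_combination - (a * A4 + a * A6 + b * A7 + b * A2
          + (b * (m * (starRingEnd ℂ) m) + (t : ℂ) * (r : ℂ) * w * (starRingEnd ℂ) m) * hwX
          + (t : ℂ) * (r : ℂ) * w * A3 + (t : ℂ) * w * A5)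

/-! ### Topology of the filled ellipse -/

noncomputable def ept (p q : ℝ) : EuclideanSpace ℝ (Fin 2) :=
  (WithLp.equiv 2 (Fin 2 → ℝ)).symm ![p, q]

lemma ept_apply0 (p q : ℝ) : ept p q 0 = p := rfl
lemma ept_apply1 (p q : ℝ) : ept p q 1 = q := rfl

lemma enorm' (x : EuclideanSpace ℝ (Fin 2)) : ‖x‖ = Real.sqrt (x 0 ^ 2 + x 1 ^ 2) := by
  rw [EuclideanSpace.norm_eq, Fin.sum_univ_two, Real.norm_eq_abs, Real.norm_eq_abs,
    _root_.sq_abs, _root_.sq_abs]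

lemma enorm_le (x : EuclideanSpace ℝ (Fin 2)) : ‖x‖ ≤ 1 ↔ x 0 ^ 2 + x 1 ^ 2 ≤ 1 := by
  rw [enorm']; exact Real.sqrt_le_one

lemma enorm_eq (x : EuclideanSpace ℝ (Fin 2)) : ‖x‖ = 1 ↔ x 0 ^ 2 + x 1 ^ 2 = 1 := by
  rw [enorm']; exact Real.sqrt_eq_one

lemma enorm_lt (x : EuclideanSpace ℝ (Fin 2)) : ‖x‖ < 1 ↔ x 0 ^ 2 + x 1 ^ 2 < 1 := by
  rw [← not_le, ← not_le, enorm', Real.one_le_sqrt]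

lemma ex_eq (x : EuclideanSpace ℝ (Fin 2)) : x = ept (x 0) (x 1) := by
  ext i
  fin_cases i <;> rfl

noncomputable def ellmap (v w : ℂ) (d : ℝ) : EuclideanSpace ℝ (Fin 2) →ₗ[ℝ] ℂ where
  toFun x := (x 0 : ℂ) * v + ((d * x 1 : ℝ) : ℂ) * w
  map_add' x y := by
    have h0 : (x + y) 0 = x 0 + y 0 := rfl
    have h1 : (x + y) 1 = x 1 + y 1 := rfl
    dsimp only
    rw [h0, h1]; push_cast; ring
  map_smul' c x := by
    have h0 : (c • x) 0 = c * x 0 := rfl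
    have h1 : (c • x) 1 = c * x 1 := rfl
    dsimp only
    rw [h0, h1]; simp only [RingHom.id_apply, Complex.real_smul]; push_cast; ring

lemma ell_facts (z₀ v w : ℂ) (d : ℝ) (hd : 0 < d)
    (hind : ∀ p q : ℝ, (p : ℂ) * v + (q : ℂ) * w = 0 → p = 0 ∧ q = 0) :
    interior (eSet z₀ v w d) = eSetI z₀ v w d ∧
    frontier (eSet z₀ v w d) = eSetF z₀ v w d ∧
    closure (eSetI z₀ v w d) = eSet z₀ v w d := by
  have hinj : Function.Injective (ellmap v w d) := by
    intro x y hxy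
    have h : ellmap v w d (x - y) = 0 := by rw [map_sub, hxy, sub_self]
    have h0 : (x - y) 0 = x 0 - y 0 := rfl
    have h1 : (x - y) 1 = x 1 - y 1 := rfl
    have h2 : ((x 0 - y 0 : ℝ) : ℂ) * v + ((d * (x 1 - y 1) : ℝ) : ℂ) * w = 0 := by
      rw [← h0, ← h1]; exact h
    obtain ⟨e0, e1⟩ := hind _ _ h2
    have e1' : x 1 = y 1 := by
      rcases mul_eq_zero.mp e1 with h' | h'
      · exact absurd h' (ne_of_gt hd)
      · linarith
    have e0' : x 0 = y 0 := by linarith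
    rw [ex_eq x, ex_eq y, e0', e1']
  have hrank : Module.finrank ℝ (EuclideanSpace ℝ (Fin 2)) = Module.finrank ℝ ℂ := by
    rw [finrank_euclideanSpace_fin, Complex.finrank_real_complex]
  let e := LinearMap.linearEquivOfInjective (ellmap v w d) hinj hrank
  let h : EuclideanSpace ℝ (Fin 2) ≃ₜ ℂ :=
    e.toContinuousLinearEquiv.toHomeomorph.trans (Homeomorph.addLeft z₀)
  have happly : ∀ x : EuclideanSpace ℝ (Fin 2),
      h x = z₀ + (x 0 : ℂ) * v + (d : ℂ) * (x 1 : ℂ) * w := by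
    intro x
    have h1 : h x = z₀ + e x := by
      simp only [h, Homeomorph.trans_apply, Homeomorph.coe_addLeft,
        ContinuousLinearEquiv.coe_toHomeomorph]
      rw [LinearEquiv.coe_toContinuousLinearEquiv']
    have h2 : e x = ellmap v w d x :=
      LinearMap.linearEquivOfInjective_apply (f := ellmap v w d) hinj hrank x
    have h3 : ellmap v w d x = ((x 0 : ℝ) : ℂ) * v + ((d * x 1 : ℝ) : ℂ) * w := rfl
    rw [h1, h2, h3]
    push_cast
    ring
  have hcb : eSet z₀ v w d = h '' Metric.closedBall 0 1 := by
    ext z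
    constructor
    · rintro ⟨p, q, hpq, rfl⟩
      refine ⟨ept p q, ?_, ?_⟩
      · rw [Metric.mem_closedBall, dist_zero_right, enorm_le, ept_apply0, ept_apply1]
        exact hpq
      · rw [happly, ept_apply0, ept_apply1]
    · rintro ⟨x, hx, rfl⟩
      refine ⟨x 0, x 1, ?_, (happly x)⟩
      rw [Metric.mem_closedBall, dist_zero_right, enorm_le] at hx
      exact hx
  have hb : eSetI z₀ v w d = h '' Metric.ball 0 1 := by
    ext z
    constructor
    · rintro ⟨p, q, hpq, rfl⟩
      refine ⟨ept p q, ?_, ?_⟩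
      · rw [Metric.mem_ball, dist_zero_right, enorm_lt, ept_apply0, ept_apply1]
        exact hpq
      · rw [happly, ept_apply0, ept_apply1]
    · rintro ⟨x, hx, rfl⟩
      refine ⟨x 0, x 1, ?_, (happly x)⟩
      rw [Metric.mem_ball, dist_zero_right, enorm_lt] at hx
      exact hx
  have hsp : eSetF z₀ v w d = h '' Metric.sphere 0 1 := by
    ext z
    constructor
    · rintro ⟨p, q, hpq, rfl⟩
      refine ⟨ept p q, ?_, ?_⟩
      · rw [Metric.mem_sphere, dist_zero_right, enorm_eq, ept_apply0, ept_apply1]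
        exact hpq
      · rw [happly, ept_apply0, ept_apply1]
    · rintro ⟨x, hx, rfl⟩
      refine ⟨x 0, x 1, ?_, (happly x)⟩
      rw [Metric.mem_sphere, dist_zero_right, enorm_eq] at hx
      exact hx
  refine ⟨?_, ?_, ?_⟩
  · rw [hcb, hb, ← Homeomorph.image_interior, interior_closedBall (0 : EuclideanSpace ℝ (Fin 2)) one_ne_zero]
  · rw [hcb, hsp, ← Homeomorph.image_frontier, frontier_closedBall (0 : EuclideanSpace ℝ (Fin 2)) one_ne_zero]
  · rw [hcb, hb, ← Homeomorph.image_closure, closure_ball (0 : EuclideanSpace ℝ (Fin 2)) one_ne_zero]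

end aux

theorem stmt_19 (a b c : ℂ) (hab : a ≠ b) (hc : ‖c‖ = 1)
    (hc' : c ≠ (a - b) ^ 2 / (((‖a - b‖ : ℝ) : ℂ) ^ 2))
    (d : ℝ) (hd : 0 < d)
    (S : ℝ → Matrix (Fin 2) (Fin 2) ℂ)
    (hS : ∀ t : ℝ, S t = !![a, (t : ℂ); c * t, b])
    (E : Set ℂ) (hE : E = ⋃ t ∈ Set.Ioo (0 : ℝ) d, numRange (S t)) :
    a ∈ frontier (numRange (S d)) ∧ b ∈ frontier (numRange (S d)) ∧
    E = interior (numRange (S d)) ∪ {a, b} ∧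
    ¬ IsOpen E ∧ ¬ IsClosed E := by
  obtain ⟨w, hw2, hw1⟩ := exists_sqrt' c hc
  have hwne : w ≠ 0 := by
    intro h; rw [h] at hw1; simp at hw1
  set z₀ : ℂ := (a + b) / 2 with hz₀
  set v : ℂ := (a - b) / 2 with hv
  have hza : z₀ + v = a := by rw [hz₀, hv]; ring
  have hzb : z₀ - v = b := by rw [hz₀, hv]; ring
  have hvne : v ≠ 0 := by
    rw [hv]
    intro h
    exact hab (sub_eq_zero.mp (by linear_combination 2 * h))
  have hind : ∀ p q : ℝ, (p : ℂ) * v + (q : ℂ) * w = 0 → p = 0 ∧ q = 0 := by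
    intro p q hpq
    by_cases hp : p = 0
    · subst hp
      refine ⟨rfl, ?_⟩
      have : (q : ℂ) * w = 0 := by simpa using hpq
      rcases mul_eq_zero.mp this with h' | h'
      · exact_mod_cast h'
      · exact absurd h' hwne
    · exfalso
      have hpC : (p : ℂ) ≠ 0 := by exact_mod_cast hp
      set R : ℝ := -2 * q / p with hR
      have hvw : (a - b) = ((R : ℝ) : ℂ) * w := by
        rw [hR]; push_cast
        field_simp
        linear_combination 2 * hpq - 2 * (p : ℂ) * hv
      have hRne : R ≠ 0 := by
        intro h
        rw [h] at hvw
        simp at hvw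
        exact hab (sub_eq_zero.mp hvw)
      apply hc'
      have habs : ‖a - b‖ = |R| := by
        rw [hvw, norm_mul, Complex.norm_real, Real.norm_eq_abs, hw1, mul_one]
      rw [habs, hvw]
      have hRsq : ((|R| : ℝ) : ℂ) ^ 2 = ((R : ℝ) : ℂ) ^ 2 := by
        norm_cast
        exact sq_abs R
      rw [hRsq, mul_pow, hw2]
      have : ((R : ℝ) : ℂ) ^ 2 ≠ 0 := pow_ne_zero 2 (by exact_mod_cast hRne)
      field_simp
      rw [mul_div_assoc, div_self (by exact_mod_cast hRne), mul_one]
  have hG : ∀ t : ℝ, numRange (S t) = eSet z₀ v w t := by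
    intro t
    rw [hS t, hz₀, hv]
    exact numRange_eq a b c w t hw2 hw1
  obtain ⟨hInt, hFr, hCl⟩ := ell_facts z₀ v w d hd hind
  have haF : a ∈ eSetF z₀ v w d := ⟨1, 0, by norm_num, by push_cast; linear_combination -hza⟩
  have hbF : b ∈ eSetF z₀ v w d := ⟨-1, 0, by norm_num, by push_cast; linear_combination -hzb⟩
  have haS : a ∈ eSet z₀ v w d := ⟨1, 0, by norm_num, by push_cast; linear_combination -hza⟩
  have hbS : b ∈ eSet z₀ v w d := ⟨-1, 0, by norm_num, by push_cast; linear_combination -hzb⟩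
  have hEeq : E = eSetI z₀ v w d ∪ {a, b} := by
    rw [hE]
    ext z
    simp only [Set.mem_iUnion, exists_prop, Set.mem_union, Set.mem_insert_iff,
      Set.mem_singleton_iff]
    constructor
    · rintro ⟨t, ⟨ht0, htd⟩, hz⟩
      rw [hG t] at hz
      obtain ⟨p, q, hpq, rfl⟩ := hz
      by_cases hq : q = 0
      · subst hq
        rcases lt_or_ge (p ^ 2) 1 with hp2 | hp2
        · left
          exact ⟨p, 0, by simpa using hp2, by push_cast; ring⟩
        · have hp2' : p ^ 2 = 1 := le_antisymm (by nlinarith) hp2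
          rcases mul_eq_zero.mp (show (p - 1) * (p + 1) = 0 by linear_combination hp2') with
            h1 | h1
          · right; left
            rw [show p = 1 by linarith]
            push_cast
            linear_combination hza
          · right; right
            rw [show p = -1 by linarith]
            push_cast
            linear_combination hzb
      · left
        have hq2 : 0 < q ^ 2 := by rcases lt_or_gt_of_ne hq with h' | h' <;> nlinarith
        refine ⟨p, t * q / d, ?_, ?_⟩
        · have h1 : (t * q / d) ^ 2 < q ^ 2 := by
            rw [div_pow, div_lt_iff₀ (by positivity), mul_pow]
            have hpos : 0 < q ^ 2 * ((d - t) * (d + t)) :=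
              mul_pos hq2 (mul_pos (by linarith) (by linarith))
            nlinarith [hpos]
          nlinarith
        · have hdne : (d : ℂ) ≠ 0 := by exact_mod_cast ne_of_gt hd
          push_cast
          field_simp
          try ring
    · rintro (hz | hz | hz)
      · obtain ⟨p, q, hpq, rfl⟩ := hz
        by_cases hq : q = 0
        · refine ⟨d / 2, ⟨by linarith, by linarith⟩, ?_⟩
          rw [hG]
          subst hq
          exact ⟨p, 0, by nlinarith, by push_cast; ring⟩
        · have hq2 : 0 < q ^ 2 := by rcases lt_or_gt_of_ne hq with h' | h' <;> nlinarith
          have hP : 0 < 1 - p ^ 2 := by nlinarith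
          have hqP : q ^ 2 < 1 - p ^ 2 := by nlinarith
          have hsqrtP : 0 < Real.sqrt (1 - p ^ 2) := Real.sqrt_pos.mpr hP
          set s : ℝ := |q| / Real.sqrt (1 - p ^ 2) with hs
          have hs0 : 0 < s := div_pos (abs_pos.mpr hq) hsqrtP
          have hs1 : s < 1 := by
            rw [hs, div_lt_one hsqrtP]
            calc |q| = Real.sqrt (q ^ 2) := (Real.sqrt_sq_eq_abs q).symm
              _ < Real.sqrt (1 - p ^ 2) := Real.sqrt_lt_sqrt (sq_nonneg q) hqP
          set t : ℝ := d * (s + 1) / 2 with ht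
          have ht0 : 0 < t := by rw [ht]; nlinarith
          have htd : t < d := by rw [ht]; nlinarith
          refine ⟨t, ⟨ht0, htd⟩, ?_⟩
          rw [hG]
          refine ⟨p, d * q / t, ?_, ?_⟩
          · have key : d ^ 2 * q ^ 2 ≤ t ^ 2 * (1 - p ^ 2) := by
              have h1 : d * s ≤ t := by rw [ht]; nlinarith
              have h2 : (d * s) ^ 2 ≤ t ^ 2 := by nlinarith [mul_pos hd hs0]
              have h3 : (d * s) ^ 2 = d ^ 2 * q ^ 2 / (1 - p ^ 2) := by
                rw [hs, mul_pow, div_pow, Real.sq_sqrt (le_of_lt hP), sq_abs]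
                ring
              rw [h3] at h2
              calc d ^ 2 * q ^ 2 = (d ^ 2 * q ^ 2 / (1 - p ^ 2)) * (1 - p ^ 2) := by
                    field_simp
                _ ≤ t ^ 2 * (1 - p ^ 2) := by nlinarith [hP]
            have hfin : (d * q / t) ^ 2 ≤ 1 - p ^ 2 := by
              rw [div_pow, div_le_iff₀ (by positivity)]
              calc (d * q) ^ 2 = d ^ 2 * q ^ 2 := by ring
                _ ≤ t ^ 2 * (1 - p ^ 2) := key
                _ = (1 - p ^ 2) * t ^ 2 := by ring
            linarith
          · have htne : (t : ℂ) ≠ 0 := by exact_mod_cast ne_of_gt ht0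
            push_cast
            field_simp
            try ring
      · subst hz
        refine ⟨d / 2, ⟨by linarith, by linarith⟩, ?_⟩
        rw [hG]
        exact ⟨1, 0, by norm_num, by push_cast; linear_combination -hza⟩
      · subst hz
        refine ⟨d / 2, ⟨by linarith, by linarith⟩, ?_⟩
        rw [hG]
        exact ⟨-1, 0, by norm_num, by push_cast; linear_combination -hzb⟩
  have hEsub : E ⊆ eSet z₀ v w d := by
    rw [hEeq]
    rintro z (hz | hz)
    · obtain ⟨p, q, hpq, rfl⟩ := hz
      exact ⟨p, q, le_of_lt hpq, rfl⟩
    · rcases hz with rfl | hz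
      · exact haS
      · rw [Set.mem_singleton_iff] at hz
        subst hz
        exact hbS
  refine ⟨?_, ?_, ?_, ?_, ?_⟩
  · rw [hG d, hFr]; exact haF
  · rw [hG d, hFr]; exact hbF
  · rw [hG d, hInt]; exact hEeq
  · intro hopen
    have haE : a ∈ E := by
      rw [hEeq]; right; exact Set.mem_insert a {b}
    have h1 : a ∈ interior E := by rw [hopen.interior_eq]; exact haE
    have h2 : a ∈ interior (eSet z₀ v w d) := interior_mono hEsub h1
    have h3 : a ∈ frontier (eSet z₀ v w d) := by rw [hFr]; exact haF
    exact h3.2 h2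
  · intro hclosed
    have h1 : z₀ + (d : ℂ) * w ∈ eSet z₀ v w d :=
      ⟨0, 1, by norm_num, by push_cast; ring⟩
    have h2 : z₀ + (d : ℂ) * w ∈ closure E := by
      have hs1 : eSetI z₀ v w d ⊆ E := by rw [hEeq]; exact Set.subset_union_left
      have := closure_mono hs1
      apply this
      rw [hCl]
      exact h1
    rw [hclosed.closure_eq] at h2
    rw [hEeq] at h2
    rcases h2 with h2 | h2
    · obtain ⟨p, q, hpq, heq⟩ := h2
      have hlin : (p : ℂ) * v + ((d * (q - 1) : ℝ) : ℂ) * w = 0 := by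
        push_cast
        linear_combination -heq
      obtain ⟨e0, e1⟩ := hind _ _ hlin
      have hq1 : q = 1 := by
        rcases mul_eq_zero.mp e1 with h' | h'
        · exact absurd h' (ne_of_gt hd)
        · linarith
      rw [e0, hq1] at hpq
      norm_num at hpq
    · rcases h2 with h2 | h2
      · have hlin : ((-1 : ℝ) : ℂ) * v + ((d : ℝ) : ℂ) * w = 0 := by
          push_cast
          linear_combination h2 - hza
        have := (hind _ _ hlin).1
        norm_num at this
      · rw [Set.mem_singleton_iff] at h2
        have hlin : ((1 : ℝ) : ℂ) * v + ((d : ℝ) : ℂ) * w = 0 := by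
          push_cast
          linear_combination h2 - hzb
        have := (hind _ _ hlin).1
        norm_num at this
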